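/- Player 2 has a winning strategy in Trail Trap on the complete graph K₅. -/

import Mathlib

open SimpleGraph

/-- A valid partial play of Trail Trap: a list of moves (directed edges), where each
move is along an edge of `G`, no edge (as an unordered pair) is used twice, and each
player's moves form a trail (move `i+2` starts where move `i` ended). Moves at even
indices belong to Player 1 and moves at odd indices to Player 2. -/
def ValidPlay {V : Type*} (G : SimpleGraph V) (l : List (V × V)) : Prop :=
  (∀ m ∈ l, G.Adj m.1 m.2) ∧
  (l.map (fun m => s(m.1, m.2))).Nodup ∧
  ∀ (i : ℕ) (h : i + 2 < l.length),
    (l.get ⟨i + 2, h⟩).1 = (l.get ⟨i, by omega⟩).2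

/-- The play `l` follows strategy `σ` on all turns with index `≡ t (mod 2)`. -/
def FollowsAt {V : Type*} (σ : List (V × V) → V × V) (t : ℕ) (l : List (V × V)) : Prop :=
  ∀ (i : ℕ) (h : i < l.length), i % 2 = t → l.get ⟨i, h⟩ = σ (l.take i)

/-- Player 1 has a winning strategy in Trail Trap on `G`: a strategy `σ` for the
even-indexed moves such that every `σ`-consistent valid play that cannot be
`σ`-consistently extended has odd length (i.e. Player 2 is the one stuck). -/
def P1Win {V : Type*} (G : SimpleGraph V) : Prop :=
  ∃ σ : List (V × V) → V × V, ∀ l : List (V × V),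
    ValidPlay G l → FollowsAt σ 0 l →
    (∀ m : V × V, ¬ (ValidPlay G (l ++ [m]) ∧ FollowsAt σ 0 (l ++ [m]))) →
    l.length % 2 = 1

/-- Player 2 has a winning strategy in Trail Trap on `G`. -/
def P2Win {V : Type*} (G : SimpleGraph V) : Prop :=
  ∃ σ : List (V × V) → V × V, ∀ l : List (V × V),
    ValidPlay G l → FollowsAt σ 1 l →
    (∀ m : V × V, ¬ (ValidPlay G (l ++ [m]) ∧ FollowsAt σ 1 (l ++ [m]))) →
    l.length % 2 = 0

/-- Player 1 has a winning strategy in Trail Trap on `G` whose first move is `u → v`. -/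
def P1WinFrom {V : Type*} (G : SimpleGraph V) (u v : V) : Prop :=
  ∃ σ : List (V × V) → V × V, σ [] = (u, v) ∧ ∀ l : List (V × V),
    ValidPlay G l → FollowsAt σ 0 l →
    (∀ m : V × V, ¬ (ValidPlay G (l ++ [m]) ∧ FollowsAt σ 0 (l ++ [m]))) →
    l.length % 2 = 1

/-- Player 2 has a winning strategy in Trail Trap on `G`, given that Player 1's first
move was `u → v`. -/
def P2WinAfter {V : Type*} (G : SimpleGraph V) (u v : V) : Prop :=
  ∃ σ : List (V × V) → V × V, ∀ l : List (V × V),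
    l.head? = some (u, v) → ValidPlay G l → FollowsAt σ 1 l →
    (∀ m : V × V, ¬ (ValidPlay G (l ++ [m]) ∧ FollowsAt σ 1 (l ++ [m]))) →
    l.length % 2 = 0

namespace TTaux

def pos (a b : Fin 5) : Nat := min a.val b.val * 5 + max a.val b.val
def em (a b : Fin 5) : Nat := 2 ^ pos a b
def mov (mask : Nat) (a b : Fin 5) : Bool := (a != b) && !(mask.testBit (pos a b))

def win : Nat → Bool → Nat → Fin 5 → Fin 5 → Bool
  | 0, _, _, _, _ => false
  | f+1, true, mask, p1, p2 =>
      (List.finRange 5).any fun v => mov mask p2 v && win f false (mask ||| em p2 v) p1 v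
  | f+1, false, mask, p1, p2 =>
      (List.finRange 5).all fun v => !(mov mask p1 v) || win f true (mask ||| em p1 v) v p2

def pairs : List (Fin 5 × Fin 5) :=
  (List.finRange 5).flatMap fun a => (List.finRange 5).map fun b => (a, b)

def openPred (mask : Nat) (p1 : Fin 5) (m : Fin 5 × Fin 5) : Bool :=
  mov mask m.1 m.2 && win 10 false (mask ||| em m.1 m.2) p1 m.2

def openAny (mask : Nat) (p1 : Fin 5) : Bool := pairs.any (openPred mask p1)
def openMove (mask : Nat) (p1 : Fin 5) : Fin 5 × Fin 5 :=
  (pairs.find? (openPred mask p1)).getD (0, 0)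

def stepPred (f mask : Nat) (p1 p2 v : Fin 5) : Bool :=
  mov mask p2 v && win f false (mask ||| em p2 v) p1 v
def stepMove (f mask : Nat) (p1 p2 : Fin 5) : Fin 5 :=
  ((List.finRange 5).find? (stepPred f mask p1 p2)).getD 0

def maskOf (l : List (Fin 5 × Fin 5)) : Nat := l.foldr (fun m acc => em m.1 m.2 ||| acc) 0
def endAt (l : List (Fin 5 × Fin 5)) (i : Nat) : Fin 5 := (l.getD i (0, 0)).2

def strat (l : List (Fin 5 × Fin 5)) : Fin 5 × Fin 5 :=
  if l.length = 1 then openMove (maskOf l) (endAt l 0)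
  else (endAt l (l.length - 2),
        stepMove (11 - l.length) (maskOf l) (endAt l (l.length - 1)) (endAt l (l.length - 2)))

theorem openFact : ∀ u v : Fin 5, u ≠ v → openAny (em u v) v = true := by decide

theorem posSym : ∀ a b c d : Fin 5, pos a b = pos c d ↔ s(a, b) = s(c, d) := by decide

theorem win_true_succ (f mask p1 p2) :
    win (f+1) true mask p1 p2 = (List.finRange 5).any (stepPred f mask p1 p2) := rfl

theorem exists_find? {α} (p : α → Bool) (l : List α) (h : l.any p = true) :
    ∃ a, l.find? p = some a ∧ p a = true := by
  rw [List.any_eq_true] at h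
  have hs : (l.find? p).isSome := List.find?_isSome.mpr h
  obtain ⟨b, hb⟩ := Option.isSome_iff_exists.mp hs
  exact ⟨b, hb, List.find?_some hb⟩

theorem foldr_or (l : List (Fin 5 × Fin 5)) (b : Nat) :
    l.foldr (fun m acc => em m.1 m.2 ||| acc) b = maskOf l ||| b := by
  induction l with
  | nil => simp [maskOf]
  | cons x l ih =>
      show em x.1 x.2 ||| _ = _
      rw [ih]
      show _ = (em x.1 x.2 ||| maskOf l) ||| b
      rw [Nat.or_assoc]

theorem maskOf_append (l : List (Fin 5 × Fin 5)) (m : Fin 5 × Fin 5) :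
    maskOf (l ++ [m]) = maskOf l ||| em m.1 m.2 := by
  rw [maskOf, List.foldr_append]
  show l.foldr _ (em m.1 m.2 ||| 0) = _
  rw [foldr_or, Nat.or_zero]

theorem testBit_maskOf (l : List (Fin 5 × Fin 5)) (k : Nat) :
    (maskOf l).testBit k = true ↔ ∃ x ∈ l, pos x.1 x.2 = k := by
  induction l with
  | nil => simp [maskOf]
  | cons x l ih =>
      show (em x.1 x.2 ||| maskOf l).testBit k = true ↔ _
      rw [Nat.testBit_or]
      simp only [em, Nat.testBit_two_pow, Bool.or_eq_true, decide_eq_true_iff, ih,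
        List.mem_cons]
      constructor
      · rintro (h | ⟨y, hy, hk⟩)
        · exact ⟨x, Or.inl rfl, h⟩
        · exact ⟨y, Or.inr hy, hk⟩
      · rintro ⟨y, (rfl | hy), hk⟩
        · exact Or.inl hk
        · exact Or.inr ⟨y, hy, hk⟩

theorem mov_iff (l : List (Fin 5 × Fin 5)) (a b : Fin 5) :
    mov (maskOf l) a b = true ↔
      a ≠ b ∧ s(a, b) ∉ l.map (fun x => s(x.1, x.2)) := by
  rw [mov, Bool.and_eq_true, bne_iff_ne, Bool.not_eq_true', ← Bool.not_eq_true,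
    testBit_maskOf]
  constructor
  · rintro ⟨hne, h⟩
    refine ⟨hne, fun hc => h ?_⟩
    rw [List.mem_map] at hc
    obtain ⟨x, hx, hs⟩ := hc
    exact ⟨x, hx, (posSym _ _ _ _).mpr hs⟩
  · rintro ⟨hne, h⟩
    refine ⟨hne, fun hc => h ?_⟩
    obtain ⟨x, hx, hk⟩ := hc
    exact List.mem_map.mpr ⟨x, hx, (posSym _ _ _ _).mp hk⟩

section Lists

variable {V : Type*} {G : SimpleGraph V} {σ : List (V × V) → V × V} {t : ℕ}

theorem valid_of_append {l : List (V × V)} {m : V × V}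
    (h : ValidPlay G (l ++ [m])) : ValidPlay G l := by
  obtain ⟨h1, h2, h3⟩ := h
  refine ⟨fun x hx => h1 x (List.mem_append_left _ hx), ?_, ?_⟩
  · rw [List.map_append] at h2
    exact h2.of_append_left
  · intro i hi
    have hi' : i + 2 < (l ++ [m]).length := by simp; omega
    have := h3 i hi'
    simpa [List.get_eq_getElem, List.getElem_append_left, hi,
      show i < l.length by omega] using this

theorem follows_of_append {l : List (V × V)} {m : V × V}
    (h : FollowsAt σ t (l ++ [m])) : FollowsAt σ t l := by
  intro i hi ht
  have hi' : i < (l ++ [m]).length := by simp; omega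
  have := h i hi' ht
  rw [List.get_eq_getElem, List.getElem_append_left hi,
    List.take_append_of_le_length (le_of_lt hi)] at this
  simpa [List.get_eq_getElem] using this

theorem follows_append {l : List (V × V)} {m : V × V}
    (hF : FollowsAt σ t l) (hm : l.length % 2 = t → m = σ l) :
    FollowsAt σ t (l ++ [m]) := by
  intro i hi ht
  rw [List.length_append, List.length_singleton] at hi
  rcases Nat.lt_or_ge i l.length with hlt | hge
  · rw [List.get_eq_getElem, List.getElem_append_left hlt,
      List.take_append_of_le_length (le_of_lt hlt)]
    simpa [List.get_eq_getElem] using hF i hlt ht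
  · have hie : i = l.length := by omega
    subst hie
    simp only [List.get_eq_getElem, List.getElem_concat_length, List.take_left]
    exact hm ht

end Lists

theorem valid_append {l : List (Fin 5 × Fin 5)} {m : Fin 5 × Fin 5}
    (hV : ValidPlay (⊤ : SimpleGraph (Fin 5)) l) (hne : m.1 ≠ m.2)
    (hnew : s(m.1, m.2) ∉ l.map (fun x => s(x.1, x.2)))
    (hstart : ∀ _ : 2 ≤ l.length, m.1 = endAt l (l.length - 2)) :
    ValidPlay (⊤ : SimpleGraph (Fin 5)) (l ++ [m]) := by
  obtain ⟨h1, h2, h3⟩ := hV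
  refine ⟨?_, ?_, ?_⟩
  · intro x hx
    rcases List.mem_append.mp hx with hx | hx
    · exact h1 x hx
    · rcases List.mem_singleton.mp hx with rfl
      exact (SimpleGraph.top_adj _ _).mpr hne
  · rw [List.map_append]
    simp only [List.map_cons, List.map_nil]
    rw [List.nodup_append]
    exact ⟨h2, List.nodup_singleton _, fun a ha b hb => by
      rw [List.mem_singleton] at hb; subst hb; rintro rfl; exact hnew ha⟩
  · intro i hi
    rw [List.length_append, List.length_singleton] at hi
    rcases Nat.lt_or_ge (i + 2) l.length with hlt | hge
    · have := h3 i hlt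
      simp only [List.get_eq_getElem] at this ⊢
      rw [List.getElem_append_left hlt, List.getElem_append_left (by omega)]
      exact this
    · have hie : i + 2 = l.length := by omega
      have h2le : 2 ≤ l.length := by omega
      simp only [List.get_eq_getElem]
      rw [show (l ++ [m])[i+2]'(by simpa using hi) = m by
            rw [List.getElem_append_right (by omega)]
            simp [hie],
          List.getElem_append_left (by omega)]
      rw [hstart h2le, endAt, List.getD_eq_getElem l (0,0) (by omega : l.length - 2 < l.length)]
      congr 2
      omega

theorem endAt_append_lt {l : List (Fin 5 × Fin 5)} {m : Fin 5 × Fin 5} {i : Nat}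
    (h : i < l.length) : endAt (l ++ [m]) i = endAt l i := by
  rw [endAt, endAt, List.getD_eq_getElem _ _ (by simp; omega),
    List.getD_eq_getElem _ _ h, List.getElem_append_left h]

theorem endAt_append_self {l : List (Fin 5 × Fin 5)} {m : Fin 5 × Fin 5} :
    endAt (l ++ [m]) l.length = m.2 := by
  rw [endAt, List.getD_eq_getElem _ _ (by rw [List.length_append, List.length_singleton]; exact Nat.lt_succ_self _), List.getElem_concat_length]
  rfl

def Inv (l : List (Fin 5 × Fin 5)) : Prop :=
  (l.length = 1 → openAny (maskOf l) (endAt l 0) = true) ∧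
  (l.length % 2 = 1 → 3 ≤ l.length →
     win (12 - l.length) true (maskOf l) (endAt l (l.length - 1)) (endAt l (l.length - 2)) = true) ∧
  (l.length % 2 = 0 → 2 ≤ l.length →
     win (12 - l.length) false (maskOf l) (endAt l (l.length - 2)) (endAt l (l.length - 1)) = true)

theorem inv_main : ∀ l : List (Fin 5 × Fin 5),
    ValidPlay (⊤ : SimpleGraph (Fin 5)) l → FollowsAt strat 1 l → Inv l := by
  intro l
  induction l using List.reverseRecOn with
  | nil =>
      intro _ _
      refine ⟨by simp, by simp, fun _ h => by simp at h⟩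
  | append_singleton l m ih =>
      intro hV hF
      have hInv := ih (valid_of_append hV) (follows_of_append hF)
      have hadj : m.1 ≠ m.2 := by
        have := hV.1 m (List.mem_append_right _ (List.mem_singleton_self m))
        exact (SimpleGraph.top_adj _ _).mp this
      have hnew : s(m.1, m.2) ∉ l.map (fun x => s(x.1, x.2)) := by
        have h2 := hV.2.1
        rw [List.map_append, List.map_cons, List.map_nil, List.nodup_append] at h2
        exact fun hc => h2.2.2 _ hc _ (List.mem_singleton_self _) rfl
      have hmov : mov (maskOf l) m.1 m.2 = true := (mov_iff l m.1 m.2).mpr ⟨hadj, hnew⟩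
      have hstart : 2 ≤ l.length → m.1 = endAt l (l.length - 2) := by
        intro h2
        have h3 := hV.2.2 (l.length - 2) (by simp; omega)
        simp only [List.get_eq_getElem] at h3
        rw [List.getElem_append_left (by omega : l.length - 2 < l.length)] at h3
        rw [List.getElem_append_right (by omega : l.length ≤ l.length - 2 + 2)] at h3
        simp only [show l.length - 2 + 2 - l.length = 0 from by omega,
          List.getElem_cons_zero] at h3
        rw [endAt, List.getD_eq_getElem _ _ (by omega : l.length - 2 < l.length)]
        exact h3
      refine ⟨?_, ?_, ?_⟩
      · -- length (l ++ [m]) = 1 : opening invariant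
        intro h1
        rw [List.length_append, List.length_singleton] at h1
        have hl0 : l = [] := List.length_eq_zero_iff.mp (by omega)
        subst hl0
        simp only [List.nil_append]
        have : maskOf [m] = em m.1 m.2 := by
          show em m.1 m.2 ||| 0 = _
          rw [Nat.or_zero]
        rw [this]
        show openAny (em m.1 m.2) m.2 = true
        exact openFact m.1 m.2 hadj
      · -- odd length ≥ 3 : P1 just moved (m is P1's move)
        intro hodd h3le
        rw [List.length_append, List.length_singleton] at hodd h3le ⊢
        have hn2 : 2 ≤ l.length := by omega
        have hne : l.length % 2 = 0 := by omega
        have hw := hInv.2.2 hne hn2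
        have hfz : 12 - l.length ≠ 0 := by
          intro h0
          rw [h0] at hw
          exact absurd hw (by simp [win])
        obtain ⟨g, hg⟩ : ∃ g, 12 - l.length = g + 1 :=
          ⟨12 - l.length - 1, by omega⟩
        rw [hg] at hw
        have hall := List.all_eq_true.mp hw m.2 (List.mem_finRange m.2)
        rw [Bool.or_eq_true] at hall
        rw [← hstart hn2] at hall
        rcases hall with hbad | hgood
        · rw [hmov] at hbad
          simp at hbad
        · -- conclusion
          have e1 : l.length + 1 - 1 = l.length := by omega
          have e2 : 12 - (l.length + 1) = g := by omega
          rw [e1, e2, maskOf_append, endAt_append_self,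
            endAt_append_lt (by omega : l.length + 1 - 2 < l.length)]
          rw [show l.length + 1 - 2 = l.length - 1 from by omega]
          exact hgood
      · -- even length ≥ 2 : P2 just moved, so m = strat l
        intro heven h2le
        rw [List.length_append, List.length_singleton] at heven h2le ⊢
        have hodd : l.length % 2 = 1 := by omega
        have hm : m = strat l := by
          have := hF l.length (by simp) hodd
          simpa [List.get_eq_getElem, List.getElem_concat_length, List.take_left]
            using this
        rcases Nat.lt_or_ge l.length 3 with hlt3 | hge3
        · -- l.length = 1 : opening response
          have h1 : l.length = 1 := by omega
          have hop := hInv.1 h1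
          obtain ⟨a, hfind, hpred⟩ := exists_find? _ _ hop
          have hma : m = a := by
            rw [hm, strat, if_pos h1, openMove, hfind, Option.getD_some]
          subst hma
          rw [openPred, Bool.and_eq_true] at hpred
          have e1 : l.length + 1 - 2 = 0 := by omega
          have e2 : l.length + 1 - 1 = l.length := by omega
          have e3 : 12 - (l.length + 1) = 10 := by omega
          rw [e2, e1, e3, maskOf_append, endAt_append_self,
            endAt_append_lt (by omega : 0 < l.length)]
          exact hpred.2
        · -- l.length odd ≥ 3 : strategy step
          have hw := hInv.2.1 hodd hge3
          have hfz : 12 - l.length ≠ 0 := by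
            intro h0
            rw [h0] at hw
            exact absurd hw (by simp [win])
          obtain ⟨g, hg⟩ : ∃ g, 12 - l.length = g + 1 := ⟨12 - l.length - 1, by omega⟩
          rw [hg, win_true_succ] at hw
          obtain ⟨v, hfind, hpred⟩ := exists_find? _ _ hw
          have hmv : m = (endAt l (l.length - 2), v) := by
            rw [hm, strat, if_neg (by omega : ¬ l.length = 1),
              show 11 - l.length = g from by omega, stepMove, hfind, Option.getD_some]
          rw [stepPred, Bool.and_eq_true] at hpred
          have e0 : l.length + 1 - 1 = l.length := by omega
          have e1 : l.length + 1 - 2 = l.length - 1 := by omega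
          have e2 : 12 - (l.length + 1) = g := by omega
          rw [e0, e1, e2, maskOf_append, endAt_append_self,
            endAt_append_lt (by omega : l.length - 1 < l.length)]
          rw [hmv]
          exact hpred.2

end TTaux

/-- Player 2 has a winning strategy in Trail Trap on the complete graph `K₅`. -/
theorem stmt_7 : P2Win (⊤ : SimpleGraph (Fin 5)) := by
  refine ⟨TTaux.strat, ?_⟩
  intro l hV hF hstuck
  by_contra hc
  have hodd : l.length % 2 = 1 := by omega
  have hInv := TTaux.inv_main l hV hF
  rcases Nat.lt_or_ge l.length 3 with hlt3 | hge3
  · -- length 1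
    have h1 : l.length = 1 := by omega
    have hop := hInv.1 h1
    obtain ⟨a, hfind, hpred⟩ := TTaux.exists_find? _ _ hop
    have hsl : TTaux.strat l = a := by
      rw [TTaux.strat, if_pos h1, TTaux.openMove, hfind, Option.getD_some]
    rw [TTaux.openPred, Bool.and_eq_true] at hpred
    have hmm := (TTaux.mov_iff l a.1 a.2).mp hpred.1
    refine hstuck (TTaux.strat l) ⟨?_, ?_⟩
    · rw [hsl]
      exact TTaux.valid_append hV hmm.1 hmm.2 (fun h => absurd h (by omega))
    · exact TTaux.follows_append hF (fun _ => rfl)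
  · -- length odd ≥ 3
    have hw := hInv.2.1 hodd hge3
    have hfz : 12 - l.length ≠ 0 := by
      intro h0
      rw [h0] at hw
      exact absurd hw (by simp [TTaux.win])
    obtain ⟨g, hg⟩ : ∃ g, 12 - l.length = g + 1 := ⟨12 - l.length - 1, by omega⟩
    rw [hg, TTaux.win_true_succ] at hw
    obtain ⟨v, hfind, hpred⟩ := TTaux.exists_find? _ _ hw
    have hsl : TTaux.strat l = (TTaux.endAt l (l.length - 2), v) := by
      rw [TTaux.strat, if_neg (by omega : ¬ l.length = 1),
        show 11 - l.length = g from by omega, TTaux.stepMove, hfind, Option.getD_some]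
    rw [TTaux.stepPred, Bool.and_eq_true] at hpred
    have hmm := (TTaux.mov_iff l (TTaux.endAt l (l.length - 2)) v).mp hpred.1
    refine hstuck (TTaux.strat l) ⟨?_, ?_⟩
    · rw [hsl]
      exact TTaux.valid_append hV hmm.1 hmm.2 (fun _ => rfl)
    · exact TTaux.follows_append hF (fun _ => rfl)
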